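/- Let t ≥ 1 and let n be a multiple of 2t with n ≥ 4t. Then the number of binary words w of length n whose prefix normal form equals 1^{2t} (01)^{(n−2t)/2} is at least C_t^{(n−4t)/(2t)}, where C_t = (1/(t+1))·C(2t,t) is the t-th Catalan number. -/

import Mathlib

/-- Number of ones of the infinite binary word `w` in the 0-indexed
half-open interval of positions `[a, b)`. Thus `cnt w j (j+k)` is the number
of 1s in the subword `w[j+1, j+k]` (1-indexed), and `cnt w 0 k` is the number
of 1s in the prefix of length `k`. -/
def cnt (w : ℕ → Bool) (a b : ℕ) : ℕ :=
  ((Finset.Ico a b).filter (fun i => w i = true)).card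

/-- Extend a binary word of length `n` to an infinite word by `false`s. -/
def ext {n : ℕ} (w : Fin n → Bool) : ℕ → Bool :=
  fun i => if h : i < n then w ⟨i, h⟩ else false

/-- Extend a finite binary word (a list, `true = 1`, `false = 0`) to an
infinite word by `false`s. -/
def extL (l : List Bool) : ℕ → Bool :=
  fun i => l.getD i false

/-- The profile `f_w(k)` of a word of length `n`: the maximum number of 1s in
any subword of length `k`, i.e. `max_{0 ≤ j ≤ n-k} |w[j+1, j+k]|₁`. -/
def profile (n : ℕ) (w : ℕ → Bool) (k : ℕ) : ℕ :=
  (Finset.range (n - k + 1)).sup (fun j => cnt w j (j + k))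

namespace PNFAux

lemma cnt_zero_succ (w : ℕ → Bool) (p : ℕ) :
    cnt w 0 (p+1) = cnt w 0 p + (if w p = true then 1 else 0) := by
  unfold cnt
  rw [← Finset.range_eq_Ico, Finset.range_add_one, Finset.filter_insert]
  by_cases h : w p = true
  · rw [if_pos h, Finset.card_insert_of_notMem (by simp), if_pos h, Finset.range_eq_Ico]
  · rw [if_neg h, if_neg h, Nat.add_zero, Finset.range_eq_Ico]

lemma cnt_extL (l : List Bool) (p : ℕ) : cnt (extL l) 0 p = (l.take p).count true := by
  induction p with
  | zero => simp [cnt]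
  | succ p ih =>
    rw [cnt_zero_succ, ih, List.take_succ, List.count_append]
    by_cases h : p < l.length
    · rw [List.getElem?_eq_getElem h]
      have hx : extL l p = l[p] := List.getD_eq_getElem l false h
      by_cases hb : l[p] = true
      · rw [if_pos (by rw [hx, hb]), hb]; simp
      · rw [if_neg (by rw [hx]; exact hb)]
        have : l[p] = false := by revert hb; cases l[p] <;> simp
        rw [this]; simp
    · rw [List.getElem?_eq_none (by omega)]
      rw [if_neg (by unfold extL; rw [List.getD_eq_default _ _ (by omega)]; simp)]
      simp

lemma cnt_add (w : ℕ → Bool) {a b c : ℕ} (hab : a ≤ b) (hbc : b ≤ c) :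
    cnt w a b + cnt w b c = cnt w a c := by
  unfold cnt
  rw [← Finset.card_union_of_disjoint
        (Finset.disjoint_filter_filter (Finset.Ico_disjoint_Ico_consecutive a b c)),
      ← Finset.filter_union, Finset.Ico_union_Ico_eq_Ico hab hbc]

lemma cnt_le (w : ℕ → Bool) (a b : ℕ) : cnt w a b ≤ b - a := by
  unfold cnt
  calc _ ≤ (Finset.Ico a b).card := Finset.card_filter_le _ _
  _ = b - a := Nat.card_Ico a b

end PNFAux

namespace PNFAux

def IsCat (t : ℕ) (c : List Bool) : Prop :=
  c.length = 2*t ∧ (∀ r, 2 * ((c.take r).count true) ≤ r) ∧ c.count true = t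

lemma count_P (t : ℕ) : ∀ p, p ≤ 2*t →
    (((List.replicate t [true, false]).flatten).take p).count true = (p+1)/2 := by
  induction t with
  | zero => intro p hp; interval_cases p; simp
  | succ t ih =>
    intro p hp
    rw [List.replicate_succ, List.flatten_cons]
    match p with
    | 0 => simp
    | 1 => simp
    | (p+2) =>
      rw [show ([true, false] : List Bool) ++ (List.replicate t [true, false]).flatten
          = true :: false :: (List.replicate t [true, false]).flatten from rfl]
      rw [List.take_succ_cons, List.take_succ_cons, List.count_cons, List.count_cons,
        ih p (by omega)]
      simp; omega

lemma len_P (t : ℕ) : ((List.replicate t [true, false]).flatten).length = 2*t := by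
  induction t with
  | zero => simp
  | succ t ih => rw [List.replicate_succ, List.flatten_cons, List.length_append, ih]; simp; omega

lemma count_P_full (t : ℕ) : ((List.replicate t [true, false]).flatten).count true = t := by
  have h := count_P t (2*t) le_rfl
  rw [List.take_of_length_le (le_of_eq (len_P t))] at h
  omega

lemma count_Q (s : ℕ) : ∀ p, p ≤ 2*s →
    (((List.replicate s [false, true]).flatten).take p).count true = p/2 := by
  induction s with
  | zero => intro p hp; interval_cases p; simp
  | succ s ih =>
    intro p hp
    rw [List.replicate_succ, List.flatten_cons]
    match p with
    | 0 => simp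
    | 1 => simp
    | (p+2) =>
      rw [show ([false, true] : List Bool) ++ (List.replicate s [false, true]).flatten
          = false :: true :: (List.replicate s [false, true]).flatten from rfl]
      rw [List.take_succ_cons, List.take_succ_cons, List.count_cons, List.count_cons,
        ih p (by omega)]
      simp

lemma len_flatten_of {t : ℕ} : ∀ (ll : List (List Bool)), (∀ c ∈ ll, c.length = 2*t) →
    ll.flatten.length = 2*t*ll.length := by
  intro ll
  induction ll with
  | nil => simp
  | cons c rest ih =>
    intro h
    rw [List.flatten_cons, List.length_append, h c (by simp),
      ih (fun c hc => h c (List.mem_cons_of_mem _ hc)), List.length_cons, Nat.mul_succ]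
    omega

lemma flatten_bounds {t : ℕ} : ∀ (ll : List (List Bool)), (∀ c ∈ ll, IsCat t c) →
    ∀ q, q ≤ 2*t*ll.length →
    2 * ((ll.flatten.take q).count true) ≤ q ∧ q ≤ 2 * ((ll.flatten.take q).count true) + 2*t := by
  intro ll
  induction ll with
  | nil => intro _ q hq; simp at hq ⊢; omega
  | cons c rest ih =>
    intro hmem q hq
    obtain ⟨hlen, hpref, hcnt⟩ := hmem c List.mem_cons_self
    rw [List.length_cons, Nat.mul_succ] at hq
    obtain ⟨K, hK⟩ : ∃ K, 2*t*rest.length = K := ⟨_, rfl⟩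
    rw [hK] at hq
    rw [List.flatten_cons, List.take_append, List.count_append, hlen]
    by_cases h : q ≤ 2*t
    · have h0 : q - 2*t = 0 := by omega
      rw [h0, List.take_zero]
      have := hpref q
      simp; omega
    · have hc2 : c.take q = c := List.take_of_length_le (by omega)
      rw [hc2, hcnt]
      have := ih (fun c hc => hmem c (List.mem_cons_of_mem _ hc)) (q - 2*t) (by rw [hK]; omega)
      omega

lemma flatten_block {t : ℕ} : ∀ (ll : List (List Bool)), (∀ c ∈ ll, IsCat t c) →
    ∀ i, i ≤ ll.length → ((ll.flatten.take (2*(t*i))).count true) = t*i := by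
  intro ll
  induction ll with
  | nil => intro _ i hi; simp at hi; simp [hi]
  | cons c rest ih =>
    intro hmem i hi
    obtain ⟨hlen, hpref, hcnt⟩ := hmem c List.mem_cons_self
    match i with
    | 0 => simp
    | (i+1) =>
      rw [List.length_cons] at hi
      have h1 : 2*(t*(i+1)) = 2*t + 2*(t*i) := by ring
      rw [List.flatten_cons, List.take_append, List.count_append, hlen, h1,
        List.take_of_length_le (by omega), hcnt, Nat.add_sub_cancel_left,
        ih (fun c hc => hmem c (List.mem_cons_of_mem _ hc)) i (by omega)]
      ring

lemma flatten_inj {t : ℕ} : ∀ (ll ll' : List (List Bool)), (∀ c ∈ ll, c.length = 2*t) →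
    (∀ c ∈ ll', c.length = 2*t) → ll.length = ll'.length → ll.flatten = ll'.flatten →
    ll = ll' := by
  intro ll
  induction ll with
  | nil => intro ll' _ _ h1 _; cases ll' <;> simp_all
  | cons c rest ih =>
    intro ll' h h' h1 h2
    match ll' with
    | [] => simp at h1
    | c' :: rest' =>
      rw [List.flatten_cons, List.flatten_cons] at h2
      obtain ⟨hc, hrest⟩ := List.append_inj h2
        (by rw [h c List.mem_cons_self, h' c' List.mem_cons_self])
      rw [hc, ih rest' (fun c hc => h c (List.mem_cons_of_mem _ hc))
        (fun c hc => h' c (List.mem_cons_of_mem _ hc)) (by simpa using h1) hrest]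

end PNFAux


def catWord (t m : ℕ) (cs : Fin m → List Bool) : List Bool :=
  (List.replicate t [true, false]).flatten ++ List.replicate (2*t) true
    ++ (List.ofFn cs).flatten

namespace PNFAux

lemma catWord_take_count (t m : ℕ) (cs : Fin m → List Bool) (p : ℕ) :
    ((catWord t m cs).take p).count true
      = ((((List.replicate t [true, false]).flatten).take p).count true)
        + (((List.replicate (2*t) true).take (p - 2*t)).count true)
        + ((((List.ofFn cs).flatten).take (p - 4*t)).count true) := by
  unfold catWord
  rw [List.take_append, List.take_append,
    List.count_append, List.count_append, List.length_append, len_P,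
    List.length_replicate]
  have h1 : 2*t + 2*t = 4*t := by ring
  rw [h1]

lemma length_catWord (t m : ℕ) (cs : Fin m → List Bool) (hcs : ∀ i, IsCat t (cs i)) :
    (catWord t m cs).length = 4*t + 2*(t*m) := by
  have hmem : ∀ c ∈ List.ofFn cs, c.length = 2*t := by
    intro c hc
    rw [List.mem_ofFn] at hc
    obtain ⟨i, rfl⟩ := hc
    exact (hcs i).1
  unfold catWord
  rw [List.length_append, List.length_append, len_P, List.length_replicate,
    len_flatten_of _ hmem, List.length_ofFn]
  ring

lemma catWord_N1 (t m : ℕ) (cs : Fin m → List Bool) (p : ℕ) (hp : p ≤ 2*t) :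
    ((catWord t m cs).take p).count true = (p+1)/2 := by
  rw [catWord_take_count, count_P t p hp, Nat.sub_eq_zero_of_le hp,
    Nat.sub_eq_zero_of_le (by omega), List.take_zero, List.take_zero]
  simp

lemma catWord_N2 (t m : ℕ) (cs : Fin m → List Bool) (p : ℕ) (hp1 : 2*t ≤ p) (hp2 : p ≤ 4*t) :
    ((catWord t m cs).take p).count true = p - t := by
  rw [catWord_take_count, List.take_of_length_le (le_of_eq_of_le (len_P t) hp1),
    count_P_full, Nat.sub_eq_zero_of_le hp2, List.take_zero, List.take_replicate,
    List.count_replicate_self]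
  simp
  omega

lemma catWord_N3 (t m : ℕ) (cs : Fin m → List Bool) (q : ℕ) :
    ((catWord t m cs).take (4*t + q)).count true
      = 3*t + (((List.ofFn cs).flatten).take q).count true := by
  rw [catWord_take_count, List.take_of_length_le (le_of_eq_of_le (len_P t) (by omega)),
    count_P_full, List.take_of_length_le (by rw [List.length_replicate]; omega),
    List.count_replicate_self, Nat.add_sub_cancel_left]
  omega

end PNFAux

namespace PNFAux

lemma decomp (t m n : ℕ) (ht : 1 ≤ t) (hn : n = 4*t + 2*(t*m)) :
    ∀ k, 2*t < k → k ≤ n → ∃ i j, 1 ≤ j ∧ j ≤ 2*t ∧ k = 2*t + 2*(t*i) + j ∧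
      4*t + 2*(t*i) ≤ n := by
  intro k hk1 hk2
  obtain ⟨q, r, hqr, hrlt⟩ : ∃ q r, k - 2*t - 1 = 2*t*q + r ∧ r < 2*t :=
    ⟨(k - 2*t - 1)/(2*t), (k - 2*t - 1) % (2*t), (Nat.div_add_mod _ _).symm,
      Nat.mod_lt _ (by omega)⟩
  obtain ⟨c, hc⟩ : ∃ c, t*q = c := ⟨_, rfl⟩
  obtain ⟨d, hd⟩ : ∃ d, t*m = d := ⟨_, rfl⟩
  have h2tq : 2*t*q = 2*c := by rw [← hc]; ring
  rw [h2tq] at hqr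
  rw [hd] at hn
  have hqm : q ≤ m := by
    have hlt : 2*t*q < 2*t*(m+1) := by
      have : 2*t*(m+1) = 2*d + 2*t := by rw [← hd]; ring
      rw [this, h2tq]; omega
    exact Nat.le_of_lt_succ (Nat.lt_of_mul_lt_mul_left hlt)
  have hcd : c ≤ d := by rw [← hc, ← hd]; exact Nat.mul_le_mul_left t hqm
  exact ⟨q, r + 1, by omega, by omega, by rw [hc]; omega, by rw [hc]; omega⟩

lemma profile_formula (t n : ℕ) (ht : 1 ≤ t) (w : ℕ → Bool) (N : ℕ → ℕ)
    (hN : ∀ p, cnt w 0 p = N p)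
    (hN1 : ∀ p, p ≤ 2*t → N p = (p+1)/2)
    (hN2 : ∀ p, 2*t ≤ p → p ≤ 4*t → N p = p - t)
    (hbound : ∀ p, p ≤ n → p ≤ 2 * N p ∧ 2 * N p ≤ p + 2*t)
    (hattain : ∀ i, 4*t + 2*(t*i) ≤ n → N (4*t + 2*(t*i)) = 3*t + t*i)
    (hdecomp : ∀ k, 2*t < k → k ≤ n → ∃ i j, 1 ≤ j ∧ j ≤ 2*t ∧ k = 2*t + 2*(t*i) + j ∧
      4*t + 2*(t*i) ≤ n)
    (hn : 4*t ≤ n) (k : ℕ) (hk : k ≤ n) :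
    profile n w k = min k (2*t) + (k - 2*t)/2 := by
  have hcnt : ∀ a b : ℕ, a ≤ b → cnt w a b + N a = N b := by
    intro a b hab
    have := cnt_add w (Nat.zero_le a) hab
    rw [hN a, hN b] at this
    omega
  apply le_antisymm
  · apply Finset.sup_le
    intro j hj
    rw [Finset.mem_range] at hj
    have hjk : j + k ≤ n := by omega
    have h1 := cnt_le w j (j + k)
    have h2 := hcnt j (j+k) (by omega)
    have h3 := hbound j (by omega)
    have h4 := hbound (j+k) hjk
    omega
  · by_cases hksmall : k ≤ 2*t
    · have ha : N (2*t) = t := by rw [hN1 (2*t) le_rfl]; omega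
      have hb : N (2*t + k) = t + k := by rw [hN2 (2*t+k) (by omega) (by omega)]; omega
      have hc := hcnt (2*t) (2*t + k) (by omega)
      have hmem : 2*t ∈ Finset.range (n - k + 1) := by rw [Finset.mem_range]; omega
      calc min k (2*t) + (k - 2*t)/2 = cnt w (2*t) (2*t + k) := by omega
        _ ≤ _ := Finset.le_sup (f := fun j => cnt w j (j + k)) hmem
    · obtain ⟨i, j, hj1, hj2, hkeq, hle⟩ := hdecomp k (by omega) hk
      have hbN := hattain i hle
      obtain ⟨b, hb⟩ : ∃ b, t*i = b := ⟨_, rfl⟩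
      rw [hb] at hkeq hle hbN
      have haN : N (2*t - j) = (2*t - j + 1)/2 := hN1 _ (by omega)
      have hc := hcnt (2*t - j) (4*t + 2*b) (by omega)
      have hmem : (2*t - j) ∈ Finset.range (n - k + 1) := by rw [Finset.mem_range]; omega
      have harg : (2*t - j) + k = 4*t + 2*b := by omega
      calc min k (2*t) + (k - 2*t)/2 = cnt w (2*t - j) ((2*t - j) + k) := by rw [harg]; omega
        _ ≤ _ := Finset.le_sup (f := fun j => cnt w j (j + k)) hmem

lemma target_count (t s k : ℕ) (hk : k ≤ 2*t + 2*s) :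
    ((List.replicate (2*t) true ++ (List.replicate s [false, true]).flatten).take k).count true
      = min k (2*t) + (k - 2*t)/2 := by
  rw [List.take_append, List.count_append, List.length_replicate,
    List.take_replicate, List.count_replicate_self]
  by_cases h : k ≤ 2*t
  · rw [Nat.sub_eq_zero_of_le h, List.take_zero]
    simp
    try omega
  · rw [count_Q s (k - 2*t) (by omega)]

end PNFAux

namespace PNFAux

open DyckStep

def stepOfBool : Bool → DyckStep := fun b => if b then D else U

def boolOfStep : DyckStep → Bool := fun s => match s with | U => false | D => true

lemma stepOfBool_inj : Function.Injective stepOfBool := by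
  intro a b h
  cases a <;> cases b <;> simp_all [stepOfBool]

lemma boolOfStep_inj : Function.Injective boolOfStep := by
  intro a b h
  cases a <;> cases b <;> simp_all [boolOfStep]

lemma count_tf (l : List Bool) : l.count true + l.count false = l.length := by
  induction l with
  | nil => simp
  | cons a l ih => cases a <;> simp [List.count_cons] <;> omega

lemma count_ud (l : List DyckStep) : l.count U + l.count D = l.length := by
  induction l with
  | nil => simp
  | cons a l ih => cases a <;> simp [List.count_cons] <;> omega

lemma eD (l : List Bool) : (l.map stepOfBool).count D = l.count true :=
  List.count_map_of_injective l stepOfBool stepOfBool_inj true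

lemma eU (l : List Bool) : (l.map stepOfBool).count U = l.count false :=
  List.count_map_of_injective l stepOfBool stepOfBool_inj false

lemma eT (l : List DyckStep) : (l.map boolOfStep).count true = l.count D :=
  List.count_map_of_injective l boolOfStep boolOfStep_inj D

noncomputable def catEquiv (t : ℕ) :
    {c : List Bool // IsCat t c} ≃ {p : DyckWord // p.semilength = t} where
  toFun c := ⟨⟨c.1.map stepOfBool, by
      obtain ⟨hlen, hpref, hcnt⟩ := c.2
      have hf : c.1.count false = t := by have := count_tf c.1; omega
      rw [eD, eU, hf, hcnt], by
      obtain ⟨hlen, hpref, hcnt⟩ := c.2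
      intro i
      rw [← List.map_take, eD, eU]
      by_cases h : i ≤ 2*t
      · have h1 := hpref i
        have h2 := count_tf (c.1.take i)
        rw [List.length_take, hlen] at h2
        omega
      · rw [List.take_of_length_le (by omega)]
        have h2 := count_tf c.1
        omega⟩, by
    obtain ⟨hlen, hpref, hcnt⟩ := c.2
    show (c.1.map stepOfBool).count U = t
    have hf : c.1.count false = t := by have := count_tf c.1; omega
    rw [eU, hf]⟩
  invFun p := ⟨p.1.toList.map boolOfStep, by
    have hp := p.2
    have hlen2 : 2 * p.1.semilength = p.1.toList.length := p.1.two_mul_semilength_eq_length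
    have hcD : p.1.toList.count D = t := by
      rw [← DyckWord.semilength_eq_count_D, hp]
    refine ⟨by rw [List.length_map]; omega, ?_, by rw [eT, hcD]⟩
    intro r
    rw [← List.map_take, eT]
    have h1 := p.1.count_D_le_count_U r
    have h2 := count_ud (p.1.toList.take r)
    have h3 : (p.1.toList.take r).length ≤ r := by rw [List.length_take]; omega
    omega⟩
  left_inv c := by
    apply Subtype.ext
    show (c.1.map stepOfBool).map boolOfStep = c.1
    rw [List.map_map]
    have : boolOfStep ∘ stepOfBool = id := by funext b; cases b <;> rfl
    rw [this, List.map_id]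
  right_inv p := by
    apply Subtype.ext
    apply DyckWord.ext
    show (p.1.toList.map boolOfStep).map stepOfBool = p.1.toList
    rw [List.map_map]
    have : stepOfBool ∘ boolOfStep = id := by funext s; cases s <;> rfl
    rw [this, List.map_id]

noncomputable instance (t : ℕ) : Fintype {c : List Bool // IsCat t c} :=
  Fintype.ofEquiv _ (catEquiv t).symm

lemma card_cat (t : ℕ) : Fintype.card {c : List Bool // IsCat t c} = catalan t := by
  rw [Fintype.card_congr (catEquiv t), DyckWord.card_dyckWord_semilength_eq_catalan]

end PNFAux

namespace PNFAux

lemma extL_eq_of (l₁ l₂ : List Bool) (hlen : l₁.length = l₂.length)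
    (h : ∀ i < l₁.length, extL l₁ i = extL l₂ i) : l₁ = l₂ := by
  apply List.ext_getElem hlen
  intro i h1 h2
  have := h i h1
  simp only [extL] at this
  rwa [List.getD_eq_getElem _ _ h1, List.getD_eq_getElem _ _ h2] at this

end PNFAux

open PNFAux in
/-- Let `t ≥ 1` and let `n` be a multiple of `2t` with `n ≥ 4t`. The number of
binary words `w` of length `n` whose prefix normal form equals
`u = 1^{2t} (01)^{(n-2t)/2}` (i.e. whose profile satisfies
`f_w(k) = |u[1,k]|₁` for all `0 ≤ k ≤ n`) is at least `C_t^{(n-4t)/(2t)}`,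
where `C_t = (1/(t+1)) C(2t,t)` is the `t`-th Catalan number. -/
theorem count_words_with_pnf_lower_bound (t : ℕ) (ht : 1 ≤ t) (n : ℕ)
    (hn : 4 * t ≤ n) (hdvd : 2 * t ∣ n) :
    catalan t ^ ((n - 4 * t) / (2 * t)) ≤
      Set.ncard {w : Fin n → Bool | ∀ k : ℕ, k ≤ n →
        profile n (ext w) k =
          cnt (extL (List.replicate (2 * t) true ++
            (List.replicate ((n - 2 * t) / 2) [false, true]).flatten)) 0 k} := by
  classical
  obtain ⟨d, hd⟩ := hdvd
  have hd2 : 2 ≤ d := by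
    by_contra h
    push_neg at h
    interval_cases d <;> omega
  set m := (n - 4*t)/(2*t) with hm
  have hsub : n - 4*t = 2*t*(d-2) := by
    have h1 : 2*t*(d-2) + 2*t*2 = 2*t*d := by
      rw [← Nat.mul_add]
      congr 1
      omega
    obtain ⟨A, hA⟩ : ∃ A, 2*t*(d-2) = A := ⟨_, rfl⟩
    obtain ⟨B, hB⟩ : ∃ B, 2*t*d = B := ⟨_, rfl⟩
    rw [hA, hB] at h1
    rw [hB] at hd
    rw [hA]
    omega
  have hmd : m = d - 2 := by
    rw [hm, hsub, Nat.mul_div_cancel_left _ (by omega : 0 < 2*t)]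
  have hn4 : n = 4*t + 2*(t*m) := by
    have h1 : 2*t*(d-2) = 2*(t*m) := by rw [hmd]; ring
    obtain ⟨b, hb⟩ : ∃ b, 2*(t*m) = b := ⟨_, rfl⟩
    rw [hb] at h1 ⊢
    rw [h1] at hsub
    omega
  have hseq : (n - 2*t)/2 = t + t*m := by
    obtain ⟨b, hb⟩ : ∃ b, t*m = b := ⟨_, rfl⟩
    have hn4' : n = 4*t + 2*b := by rw [← hb]; exact hn4
    rw [hb]
    omega
  have hRHS : ∀ k, k ≤ n → cnt (extL (List.replicate (2*t) true ++
      (List.replicate ((n - 2*t)/2) [false, true]).flatten)) 0 k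
      = min k (2*t) + (k - 2*t)/2 := by
    intro k hk
    rw [cnt_extL, hseq]
    apply target_count
    obtain ⟨b, hb⟩ : ∃ b, t*m = b := ⟨_, rfl⟩
    have hn4' : n = 4*t + 2*b := by rw [← hb]; exact hn4
    rw [hb]
    omega
  set F : (Fin m → {c : List Bool // IsCat t c}) → (Fin n → Bool) :=
    fun cs i => extL (catWord t m (fun j => (cs j).1)) i.val with hF
  have hinj : Function.Injective F := by
    intro cs cs' h
    have hlen1 := length_catWord t m (fun j => (cs j).1) (fun j => (cs j).2)
    have hlen2 := length_catWord t m (fun j => (cs' j).1) (fun j => (cs' j).2)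
    have hL : catWord t m (fun j => (cs j).1) = catWord t m (fun j => (cs' j).1) := by
      apply extL_eq_of _ _ (by rw [hlen1, hlen2])
      intro i hi
      have hi' : i < n := by rw [hlen1, ← hn4] at hi; exact hi
      exact congrFun h ⟨i, hi'⟩
    unfold catWord at hL
    have h2 := List.append_cancel_left hL
    have h3 := flatten_inj (t := t) _ _
      (by intro c hc; rw [List.mem_ofFn] at hc; obtain ⟨j, rfl⟩ := hc; exact (cs j).2.1)
      (by intro c hc; rw [List.mem_ofFn] at hc; obtain ⟨j, rfl⟩ := hc; exact (cs' j).2.1)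
      (by rw [List.length_ofFn, List.length_ofFn]) h2
    have h4 := List.ofFn_inj.mp h3
    funext j
    exact Subtype.ext (congrFun h4 j)
  have hmem : ∀ cs, F cs ∈ {w : Fin n → Bool | ∀ k : ℕ, k ≤ n →
      profile n (ext w) k =
        cnt (extL (List.replicate (2 * t) true ++
          (List.replicate ((n - 2 * t) / 2) [false, true]).flatten)) 0 k} := by
    intro cs
    intro k hk
    set cs1 : Fin m → List Bool := fun j => (cs j).1 with hcs1
    have hcsP : ∀ j, IsCat t (cs1 j) := fun j => (cs j).2
    have hlen1 := length_catWord t m cs1 hcsP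
    have hmemC : ∀ c ∈ List.ofFn cs1, IsCat t c := by
      intro c hc; rw [List.mem_ofFn] at hc; obtain ⟨j, rfl⟩ := hc; exact hcsP j
    have hext : ext (F cs) = extL (catWord t m cs1) := by
      funext i
      unfold ext
      by_cases h : i < n
      · rw [dif_pos h]
      · rw [dif_neg h]
        show false = extL (catWord t m cs1) i
        unfold extL
        rw [List.getD_eq_default _ _ (by rw [hlen1, ← hn4]; omega)]
    rw [hext, hRHS k hk]
    apply profile_formula t n ht _ (fun p => ((catWord t m cs1).take p).count true)
      (fun p => cnt_extL _ p) (fun p hp => catWord_N1 t m cs1 p hp)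
      (fun p hp1 hp2 => catWord_N2 t m cs1 p hp1 hp2) ?_ ?_ (decomp t m n ht hn4) hn k hk
    · -- hbound
      intro p hp
      by_cases h1 : p ≤ 2*t
      · rw [catWord_N1 t m cs1 p h1]; omega
      by_cases h2 : p ≤ 4*t
      · rw [catWord_N2 t m cs1 p (by omega) h2]; omega
      · have hq : p = 4*t + (p - 4*t) := by omega
        rw [hq, catWord_N3]
        have hb2 := flatten_bounds _ hmemC (p - 4*t)
          (by rw [List.length_ofFn]
              have he : 2*t*m = 2*(t*m) := by ring
              rw [he]
              obtain ⟨b, hb⟩ : ∃ b, 2*(t*m) = b := ⟨_, rfl⟩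
              rw [hb] at hn4 ⊢
              omega)
        omega
    · -- hattain
      intro i hle
      rw [catWord_N3]
      have him : i ≤ m := by
        have hti : t*i ≤ t*m := by
          obtain ⟨b, hb⟩ : ∃ b, t*i = b := ⟨_, rfl⟩
          obtain ⟨b', hb'⟩ : ∃ b', t*m = b' := ⟨_, rfl⟩
          rw [hb'] at hn4
          rw [hb] at hle
          rw [hb, hb']
          omega
        exact Nat.le_of_mul_le_mul_left hti (by omega)
      have := flatten_block _ hmemC i (by rw [List.length_ofFn]; exact him)
      rw [this]
  have hsubset : Set.range F ⊆ {w : Fin n → Bool | ∀ k : ℕ, k ≤ n →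
      profile n (ext w) k =
        cnt (extL (List.replicate (2 * t) true ++
          (List.replicate ((n - 2 * t) / 2) [false, true]).flatten)) 0 k} := by
    rintro w ⟨cs, rfl⟩
    exact hmem cs
  calc catalan t ^ m
      = Fintype.card (Fin m → {c : List Bool // IsCat t c}) := by
        rw [Fintype.card_fun, card_cat, Fintype.card_fin]
    _ = Nat.card (Fin m → {c : List Bool // IsCat t c}) := Nat.card_eq_fintype_card.symm
    _ = Nat.card (Set.range F) := (Nat.card_range_of_injective hinj).symm
    _ = (Set.range F).ncard := Nat.card_coe_set_eq _
    _ ≤ _ := Set.ncard_le_ncard hsubset (Set.toFinite _)
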